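/- Let F : (0,∞)² → ℂ be continuous with compact support contained in (0,∞)². Let m1, m2, n1, n2, c1, c2 be positive integers, and set A1 := √(m1·n1·c2)/c1 and A2 := √(m2·n2)·c1/c2. Then m1^{−2}·m2^{−3/2}·n1^{−2}·n2^{−3/2} · ∫₀^∞ ∫₀^∞ [ y1⁴·y2³ ∫_{ℝ⁴} e(m1·c2·ζ1/(c1²·ξ2·y1)) · e(m2·c1²·ζ2/(c2²·ξ1·y2)) · e(−n1·x1·y1 − n2·x5·y2) · F(m1·c2·√ξ1/(c1²·ξ2·y1), m2·c1²·ξ2/(c2²·ξ1·y2)) dx1 dx2 dx4 dx5 ] · conj(F(n1·y1, n2·y2)) · y1^{−4}·y2^{−3} · (dy1 dy2)/(y1·y2) = (c1·c2)^{−1} · 𝒥_{w0,F}(A1, A2). -/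

import Mathlib

open MeasureTheory

noncomputable section

/-- `e(x) = exp(2πix)`. -/
def e (x : ℝ) : ℂ := Complex.exp (2 * Real.pi * Complex.I * (x : ℂ))

/-- `ξ_{w0,1}` in coordinates `(x1, x2, x4, x5)`. -/
def ξw1 (x1 x2 x4 x5 : ℝ) : ℝ :=
  (x4 ^ 2 + x1 * x4 * x5 - x2 * x5) ^ 2 + (x1 * x4 - x2) ^ 2 + 2 * x4 ^ 2 + x5 ^ 2 + 1

/-- `ξ_{w0,2}`. -/
def ξw2 (x1 x2 x4 x5 : ℝ) : ℝ := (x1 * x5 + x4) ^ 2 + x1 ^ 2 + x2 ^ 2 + 1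

/-- `ζ_{w0,1}`. -/
def ζw1 (x1 x2 x4 x5 : ℝ) : ℝ := -(x1 * x5 ^ 2 + x2 * x4 + x4 * x5 + x1)

/-- `ζ_{w0,2}`. -/
def ζw2 (x1 x2 x4 x5 : ℝ) : ℝ :=
  x1 ^ 3 * x4 * x5 ^ 2 + 2 * x1 ^ 2 * x4 ^ 2 * x5 - x1 ^ 2 * x2 * x5 ^ 2 +
    x1 ^ 3 * x4 + x1 * x4 ^ 3 - x1 ^ 2 * x2 + x2 * x4 ^ 2 - x2 ^ 2 * x5 +
    2 * x1 * x4 - x5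

/-- The integrand of the inner `ℝ⁴`-integral of `𝒥_{w0,F}`. -/
def Jw0Integrand (F : ℝ → ℝ → ℂ) (A1 A2 y1 y2 x1 x2 x4 x5 : ℝ) : ℂ :=
  e (A1 * ζw1 x1 x2 x4 x5 / (ξw2 x1 x2 x4 x5 * y1)) *
  e (A2 * ζw2 x1 x2 x4 x5 / (ξw1 x1 x2 x4 x5 * y2)) *
  e (-(A1 * x1 * y1) - A2 * x5 * y2) *
  F (A1 * Real.sqrt (ξw1 x1 x2 x4 x5) / (ξw2 x1 x2 x4 x5 * y1))
    (A2 * ξw2 x1 x2 x4 x5 / (ξw1 x1 x2 x4 x5 * y2)) *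
  (starRingEnd ℂ) (F (A1 * y1) (A2 * y2))

/-- The arithmetic transform `𝒥_{w0,F}(A1, A2)`. -/
def Jw0 (F : ℝ → ℝ → ℂ) (A1 A2 : ℝ) : ℂ :=
  ((A1 : ℂ) ^ 4)⁻¹ * ((A2 : ℂ) ^ 3)⁻¹ *
    ∫ y in Set.Ioi (0 : ℝ) ×ˢ Set.Ioi (0 : ℝ),
      (∫ x : ℝ × ℝ × ℝ × ℝ, Jw0Integrand F A1 A2 y.1 y.2 x.1 x.2.1 x.2.2.1 x.2.2.2) /
        ((y.1 : ℂ) * (y.2 : ℂ))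


open ContinuousLinearMap in
lemma det_diag_scale (a b : ℝ) :
    (((ContinuousLinearMap.smulRight (1 : ℝ →L[ℝ] ℝ) a).prodMap
      (ContinuousLinearMap.smulRight (1 : ℝ →L[ℝ] ℝ) b)).det) = a * b := by
  have : ((ContinuousLinearMap.smulRight (1 : ℝ →L[ℝ] ℝ) a).prodMap
      (ContinuousLinearMap.smulRight (1 : ℝ →L[ℝ] ℝ) b) : ℝ × ℝ →ₗ[ℝ] ℝ × ℝ).det = a * b := by
    rw [← LinearMap.det_toMatrix (Module.Basis.finTwoProd ℝ), Matrix.det_fin_two]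
    simp [LinearMap.toMatrix_apply, Module.Basis.coe_finTwoProd_repr]
  exact this

/-- Change of variables `(y1, y2) ↦ (a y1, b y2)` on `(0,∞)²`. -/
lemma integral_scale_Ioi_prod (g : ℝ × ℝ → ℂ) {a b : ℝ} (ha : 0 < a) (hb : 0 < b) :
    ∫ y in Set.Ioi (0:ℝ) ×ˢ Set.Ioi (0:ℝ), g y =
      ∫ y in Set.Ioi (0:ℝ) ×ˢ Set.Ioi (0:ℝ), (a * b) • g (a * y.1, b * y.2) := by
  set S : Set (ℝ × ℝ) := Set.Ioi (0:ℝ) ×ˢ Set.Ioi (0:ℝ) with hSdef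
  have hS : MeasurableSet S := measurableSet_Ioi.prod measurableSet_Ioi
  set f : ℝ × ℝ → ℝ × ℝ := fun y => (a * y.1, b * y.2) with hf
  set f' : ℝ × ℝ →L[ℝ] ℝ × ℝ :=
    (ContinuousLinearMap.smulRight (1 : ℝ →L[ℝ] ℝ) a).prodMap
      (ContinuousLinearMap.smulRight (1 : ℝ →L[ℝ] ℝ) b) with hf'
  have hderiv : ∀ y ∈ S, HasFDerivWithinAt f f' S y := by
    intro y _
    have h1 : HasDerivAt (fun x : ℝ => a * x) a y.1 := by
      simpa using (hasDerivAt_id y.1).const_mul a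
    have h2 : HasDerivAt (fun x : ℝ => b * x) b y.2 := by
      simpa using (hasDerivAt_id y.2).const_mul b
    exact ((h1.hasFDerivAt.prodMap y h2.hasFDerivAt)).hasFDerivWithinAt
  have hinj : Set.InjOn f S := by
    intro y _ z _ h
    have h1 : a * y.1 = a * z.1 := congrArg Prod.fst h
    have h2 : b * y.2 = b * z.2 := congrArg Prod.snd h
    exact Prod.ext (mul_left_cancel₀ ha.ne' h1) (mul_left_cancel₀ hb.ne' h2)
  have himg : f '' S = S := by
    ext p
    constructor
    · rintro ⟨y, ⟨hy1, hy2⟩, rfl⟩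
      exact ⟨mul_pos ha hy1, mul_pos hb hy2⟩
    · rintro ⟨h1, h2⟩
      refine ⟨(p.1 / a, p.2 / b), ⟨div_pos h1 ha, div_pos h2 hb⟩, ?_⟩
      simp [hf, mul_div_cancel₀, ha.ne', hb.ne']
  have := integral_image_eq_integral_abs_det_fderiv_smul (volume : Measure (ℝ × ℝ))
    hS hderiv hinj g
  rw [himg] at this
  rw [this]
  refine setIntegral_congr_fun hS fun y _ => ?_
  rw [det_diag_scale, abs_of_pos (mul_pos ha hb)]

/-- the Kuznetsov integral identity for the long Weyl element `w0`. -/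
theorem kuznetsov_integral_w0 (F : ℝ → ℝ → ℂ)
    (hFc : Continuous fun p : ℝ × ℝ => F p.1 p.2)
    (hFs : HasCompactSupport fun p : ℝ × ℝ => F p.1 p.2)
    (hFsub : tsupport (fun p : ℝ × ℝ => F p.1 p.2) ⊆ Set.Ioi 0 ×ˢ Set.Ioi 0)
    (m1 m2 n1 n2 c1 c2 : ℕ) (hm1 : 0 < m1) (hm2 : 0 < m2) (hn1 : 0 < n1)
    (hn2 : 0 < n2) (hc1 : 0 < c1) (hc2 : 0 < c2)
    (A1 A2 : ℝ)
    (hA1 : A1 = Real.sqrt ((m1 * n1 * c2 : ℕ) : ℝ) / (c1 : ℝ))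
    (hA2 : A2 = Real.sqrt ((m2 * n2 : ℕ) : ℝ) * (c1 : ℝ) / (c2 : ℝ)) :
    (((m1 : ℝ) ^ (-2 : ℝ) * (m2 : ℝ) ^ (-(3/2) : ℝ) * (n1 : ℝ) ^ (-2 : ℝ) *
        (n2 : ℝ) ^ (-(3/2) : ℝ) : ℝ) : ℂ) *
      ∫ y in Set.Ioi (0 : ℝ) ×ˢ Set.Ioi (0 : ℝ),
        ((y.1 : ℂ) ^ 4 * (y.2 : ℂ) ^ 3 *
          ∫ x : ℝ × ℝ × ℝ × ℝ,
            e ((m1 : ℝ) * (c2 : ℝ) * ζw1 x.1 x.2.1 x.2.2.1 x.2.2.2 /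
                ((c1 : ℝ) ^ 2 * ξw2 x.1 x.2.1 x.2.2.1 x.2.2.2 * y.1)) *
            e ((m2 : ℝ) * (c1 : ℝ) ^ 2 * ζw2 x.1 x.2.1 x.2.2.1 x.2.2.2 /
                ((c2 : ℝ) ^ 2 * ξw1 x.1 x.2.1 x.2.2.1 x.2.2.2 * y.2)) *
            e (-((n1 : ℝ) * x.1 * y.1) - (n2 : ℝ) * x.2.2.2 * y.2) *
            F ((m1 : ℝ) * (c2 : ℝ) * Real.sqrt (ξw1 x.1 x.2.1 x.2.2.1 x.2.2.2) /
                ((c1 : ℝ) ^ 2 * ξw2 x.1 x.2.1 x.2.2.1 x.2.2.2 * y.1))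
              ((m2 : ℝ) * (c1 : ℝ) ^ 2 * ξw2 x.1 x.2.1 x.2.2.1 x.2.2.2 /
                ((c2 : ℝ) ^ 2 * ξw1 x.1 x.2.1 x.2.2.1 x.2.2.2 * y.2))) *
        (starRingEnd ℂ) (F ((n1 : ℝ) * y.1) ((n2 : ℝ) * y.2)) *
        ((y.1 : ℂ) ^ (-4 : ℤ) * (y.2 : ℂ) ^ (-3 : ℤ)) / ((y.1 : ℂ) * (y.2 : ℂ))
      = ((c1 * c2 : ℕ) : ℂ)⁻¹ * Jw0 F A1 A2 := by
  have hm1R : (0:ℝ) < m1 := by exact_mod_cast hm1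
  have hm2R : (0:ℝ) < m2 := by exact_mod_cast hm2
  have hn1R : (0:ℝ) < n1 := by exact_mod_cast hn1
  have hn2R : (0:ℝ) < n2 := by exact_mod_cast hn2
  have hc1R : (0:ℝ) < c1 := by exact_mod_cast hc1
  have hc2R : (0:ℝ) < c2 := by exact_mod_cast hc2
  have hA1pos : 0 < A1 := by
    rw [hA1]
    exact div_pos (Real.sqrt_pos.mpr (by push_cast; positivity)) hc1R
  have hA2pos : 0 < A2 := by
    rw [hA2]
    exact div_pos (mul_pos (Real.sqrt_pos.mpr (by push_cast; positivity)) hc1R) hc2R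
  have hA1sq : A1 ^ 2 * (c1:ℝ) ^ 2 = (m1:ℝ) * n1 * c2 := by
    rw [hA1, div_pow, div_mul_cancel₀ _ (by positivity : ((c1:ℝ)^2) ≠ 0),
      Real.sq_sqrt (by positivity)]
    push_cast; ring
  have hA2sq : A2 ^ 2 * (c2:ℝ) ^ 2 = (m2:ℝ) * n2 * (c1:ℝ)^2 := by
    rw [hA2, div_pow, div_mul_cancel₀ _ (by positivity : ((c2:ℝ)^2) ≠ 0),
      mul_pow, Real.sq_sqrt (by positivity)]
    push_cast; ring
  have hξ1 : ∀ x1 x2 x4 x5 : ℝ, 0 < ξw1 x1 x2 x4 x5 := by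
    intro x1 x2 x4 x5; unfold ξw1; positivity
  have hξ2 : ∀ x1 x2 x4 x5 : ℝ, 0 < ξw2 x1 x2 x4 x5 := by
    intro x1 x2 x4 x5; unfold ξw2; positivity
  set a := (n1:ℝ) / A1 with hadef
  set b := (n2:ℝ) / A2 with hbdef
  have hapos : 0 < a := div_pos hn1R hA1pos
  have hbpos : 0 < b := div_pos hn2R hA2pos
  have han : A1 * a = (n1:ℝ) := by rw [hadef]; field_simp
  have hbn : A2 * b = (n2:ℝ) := by rw [hbdef]; field_simp
  have ha2 : (m1:ℝ) * c2 * a = A1 * (c1:ℝ)^2 := by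
    rw [hadef]; field_simp; linear_combination -hA1sq
  have hb2 : (m2:ℝ) * (c1:ℝ)^2 * b = A2 * (c2:ℝ)^2 := by
    rw [hbdef]; field_simp; linear_combination -hA2sq
  have e1 : ∀ r x1 x2 x4 x5 u : ℝ,
      A1 * r / (ξw2 x1 x2 x4 x5 * (a * u)) =
        (m1:ℝ) * (c2:ℝ) * r / ((c1:ℝ)^2 * ξw2 x1 x2 x4 x5 * u) := by
    intro r x1 x2 x4 x5 u
    rcases eq_or_ne u 0 with rfl | hu
    · simp
    · rw [div_eq_div_iff
        (mul_ne_zero (hξ2 x1 x2 x4 x5).ne' (mul_ne_zero (by positivity) hu))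
        (mul_ne_zero (mul_ne_zero (by positivity) (hξ2 x1 x2 x4 x5).ne') hu)]
      linear_combination (-(r * ξw2 x1 x2 x4 x5 * u)) * ha2
  have e2 : ∀ r x1 x2 x4 x5 u : ℝ,
      A2 * r / (ξw1 x1 x2 x4 x5 * (b * u)) =
        (m2:ℝ) * (c1:ℝ)^2 * r / ((c2:ℝ)^2 * ξw1 x1 x2 x4 x5 * u) := by
    intro r x1 x2 x4 x5 u
    rcases eq_or_ne u 0 with rfl | hu
    · simp
    · rw [div_eq_div_iff
        (mul_ne_zero (hξ1 x1 x2 x4 x5).ne' (mul_ne_zero (by positivity) hu))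
        (mul_ne_zero (mul_ne_zero (by positivity) (hξ1 x1 x2 x4 x5).ne') hu)]
      linear_combination (-(r * ξw1 x1 x2 x4 x5 * u)) * hb2
  have e3 : ∀ s u : ℝ, A1 * s * (a * u) = (n1:ℝ) * s * u := by
    intro s u; linear_combination s * u * han
  have e4 : ∀ s u : ℝ, A2 * s * (b * u) = (n2:ℝ) * s * u := by
    intro s u; linear_combination s * u * hbn
  have e5 : ∀ u : ℝ, A1 * (a * u) = (n1:ℝ) * u := by
    intro u; linear_combination u * han
  have e6 : ∀ u : ℝ, A2 * (b * u) = (n2:ℝ) * u := by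
    intro u; linear_combination u * hbn
  have hmain :
      (∫ y in Set.Ioi (0 : ℝ) ×ˢ Set.Ioi (0 : ℝ),
        ((y.1 : ℂ) ^ 4 * (y.2 : ℂ) ^ 3 *
          ∫ x : ℝ × ℝ × ℝ × ℝ,
            e ((m1 : ℝ) * (c2 : ℝ) * ζw1 x.1 x.2.1 x.2.2.1 x.2.2.2 /
                ((c1 : ℝ) ^ 2 * ξw2 x.1 x.2.1 x.2.2.1 x.2.2.2 * y.1)) *
            e ((m2 : ℝ) * (c1 : ℝ) ^ 2 * ζw2 x.1 x.2.1 x.2.2.1 x.2.2.2 /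
                ((c2 : ℝ) ^ 2 * ξw1 x.1 x.2.1 x.2.2.1 x.2.2.2 * y.2)) *
            e (-((n1 : ℝ) * x.1 * y.1) - (n2 : ℝ) * x.2.2.2 * y.2) *
            F ((m1 : ℝ) * (c2 : ℝ) * Real.sqrt (ξw1 x.1 x.2.1 x.2.2.1 x.2.2.2) /
                ((c1 : ℝ) ^ 2 * ξw2 x.1 x.2.1 x.2.2.1 x.2.2.2 * y.1))
              ((m2 : ℝ) * (c1 : ℝ) ^ 2 * ξw2 x.1 x.2.1 x.2.2.1 x.2.2.2 /
                ((c2 : ℝ) ^ 2 * ξw1 x.1 x.2.1 x.2.2.1 x.2.2.2 * y.2))) *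
        (starRingEnd ℂ) (F ((n1 : ℝ) * y.1) ((n2 : ℝ) * y.2)) *
        ((y.1 : ℂ) ^ (-4 : ℤ) * (y.2 : ℂ) ^ (-3 : ℤ)) / ((y.1 : ℂ) * (y.2 : ℂ)))
      = ∫ y in Set.Ioi (0 : ℝ) ×ˢ Set.Ioi (0 : ℝ),
          (∫ x : ℝ × ℝ × ℝ × ℝ, Jw0Integrand F A1 A2 y.1 y.2 x.1 x.2.1 x.2.2.1 x.2.2.2) /
            ((y.1 : ℂ) * (y.2 : ℂ)) := by
    rw [integral_scale_Ioi_prod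
      (fun y => (∫ x : ℝ × ℝ × ℝ × ℝ, Jw0Integrand F A1 A2 y.1 y.2 x.1 x.2.1 x.2.2.1 x.2.2.2) /
        ((y.1 : ℂ) * (y.2 : ℂ))) hapos hbpos]
    refine setIntegral_congr_fun (measurableSet_Ioi.prod measurableSet_Ioi) fun y hy => ?_
    have hy1 : (0:ℝ) < y.1 := hy.1
    have hy2 : (0:ℝ) < y.2 := hy.2
    simp only [Jw0Integrand, e1, e2, e3, e4, e5, e6]
    rw [integral_mul_const]
    have hy1c : (y.1 : ℂ) ≠ 0 := Complex.ofReal_ne_zero.mpr hy1.ne'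
    have hy2c : (y.2 : ℂ) ≠ 0 := Complex.ofReal_ne_zero.mpr hy2.ne'
    have hac : ((a : ℝ) : ℂ) ≠ 0 := Complex.ofReal_ne_zero.mpr hapos.ne'
    have hbc : ((b : ℝ) : ℂ) ≠ 0 := Complex.ofReal_ne_zero.mpr hbpos.ne'
    have hz4 : (y.1 : ℂ) ^ (-4 : ℤ) = ((y.1 : ℂ) ^ (4 : ℕ))⁻¹ := by
      rw [zpow_neg]; norm_cast
    have hz3 : (y.2 : ℂ) ^ (-3 : ℤ) = ((y.2 : ℂ) ^ (3 : ℕ))⁻¹ := by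
      rw [zpow_neg]; norm_cast
    rw [hz4, hz3, Complex.real_smul]
    push_cast
    field_simp
    ring_nf
    rw [mul_comm]
    congr 1
    refine integral_congr_ae (Filter.Eventually.of_forall fun x => ?_)
    ring_nf
  rw [hmain, Jw0]
  have hreal : (m1 : ℝ) ^ (-2 : ℝ) * (m2 : ℝ) ^ (-(3/2) : ℝ) * (n1 : ℝ) ^ (-2 : ℝ) *
      (n2 : ℝ) ^ (-(3/2) : ℝ)
      = ((c1:ℝ) * (c2:ℝ))⁻¹ * ((A1 ^ 4)⁻¹ * (A2 ^ 3)⁻¹) := by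
    have hm1' : (m1:ℝ) ^ (-2 : ℝ) = ((m1:ℝ) ^ (2:ℕ))⁻¹ := by
      rw [show (-2 : ℝ) = -((2:ℕ):ℝ) by norm_num, Real.rpow_neg hm1R.le, Real.rpow_natCast]
    have hn1' : (n1:ℝ) ^ (-2 : ℝ) = ((n1:ℝ) ^ (2:ℕ))⁻¹ := by
      rw [show (-2 : ℝ) = -((2:ℕ):ℝ) by norm_num, Real.rpow_neg hn1R.le, Real.rpow_natCast]
    have h32 : (m2:ℝ) ^ (-(3/2) : ℝ) * (n2:ℝ) ^ (-(3/2) : ℝ)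
        = (((m2:ℝ) * n2) * Real.sqrt ((m2:ℝ) * n2))⁻¹ := by
      rw [← Real.mul_rpow hm2R.le hn2R.le, Real.rpow_neg (by positivity),
        show ((3:ℝ)/2) = 1 + 1/2 by norm_num, Real.rpow_add (by positivity),
        Real.rpow_one, ← Real.sqrt_eq_rpow]
    have h4 : A1 ^ 4 = ((m1:ℝ) * n1 * c2) ^ 2 / (c1:ℝ) ^ 4 := by
      rw [hA1, div_pow, show (4:ℕ) = 2 * 2 from rfl, pow_mul, Real.sq_sqrt (by positivity)]
      push_cast; ring
    have h3 : A2 ^ 3 = ((m2:ℝ) * n2) * Real.sqrt ((m2:ℝ) * n2) * (c1:ℝ) ^ 3 / (c2:ℝ) ^ 3 := by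
      rw [hA2, mul_div_assoc, mul_pow, div_pow, pow_succ, Real.sq_sqrt (by positivity)]
      push_cast; ring
    rw [hm1', hn1',
      show ((m1:ℝ) ^ (2:ℕ))⁻¹ * (m2:ℝ) ^ (-(3/2) : ℝ) * ((n1:ℝ) ^ (2:ℕ))⁻¹ *
          (n2:ℝ) ^ (-(3/2) : ℝ)
        = ((m1:ℝ) ^ (2:ℕ))⁻¹ * ((n1:ℝ) ^ (2:ℕ))⁻¹ *
          ((m2:ℝ) ^ (-(3/2) : ℝ) * (n2:ℝ) ^ (-(3/2) : ℝ)) by ring,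
      h32, h4, h3]
    have hs2 : Real.sqrt ((m2:ℝ) * n2) ≠ 0 := (Real.sqrt_pos.mpr (by positivity)).ne'
    field_simp
  have hC : (((m1 : ℝ) ^ (-2 : ℝ) * (m2 : ℝ) ^ (-(3/2) : ℝ) * (n1 : ℝ) ^ (-2 : ℝ) *
      (n2 : ℝ) ^ (-(3/2) : ℝ) : ℝ) : ℂ)
      = ((c1 * c2 : ℕ) : ℂ)⁻¹ * (((A1 : ℂ) ^ 4)⁻¹ * ((A2 : ℂ) ^ 3)⁻¹) := by
    rw [hreal]; push_cast; ring
  rw [hC]; ring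


end
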